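/- arXiv:2104.06497 — 2 statements merged into one kernel-verified Lean document; each statement's English description precedes it below -/
import Mathlib

section
/- Let X be a real infinite-dimensional Banach space with a Schauder basis (x_n)_{n=1}^∞ with basis constant K, coordinate functionals (x*_n) and V the closed linear span of {x*_n : n ∈ ℕ} in X*. Then sh((x_n)) ≤ d̂(B_{X*}, V) ≤ (K+1)·sh((x_n)). -/
open Filter Metric NormedSpace Set Topology

noncomputable section

variable {E : Type*} [NormedAddCommGroup E] [NormedSpace ℝ E]

/-- `f` is the sequence of coordinate functionals of the Schauder basis `x`:
every vector has an expansion along `x`, and such expansions are unique. -/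
structure IsSchauderBasis (x : ℕ → E) (f : ℕ → E →L[ℝ] ℝ) : Prop where
  expand : ∀ v : E,
    Tendsto (fun n => ∑ i ∈ Finset.range n, f i v • x i) atTop (𝓝 v)
  unique : ∀ (a : ℕ → ℝ) (v : E),
    Tendsto (fun n => ∑ i ∈ Finset.range n, a i • x i) atTop (𝓝 v) → ∀ i, a i = f i v

/-- the `n`-th basis projection `P_n`. -/
def basisProj (x : ℕ → E) (f : ℕ → E →L[ℝ] ℝ) (n : ℕ) : E →L[ℝ] E :=
  ∑ i ∈ Finset.range n, (f i).smulRight (x i)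

/-- closed linear span of `{y i : i ≥ n}`. -/
def tailSpan (y : ℕ → E) (n : ℕ) : Submodule ℝ E :=
  (Submodule.span ℝ (y '' {i | n ≤ i})).topologicalClosure

/-- `‖g‖_n` : the norm of the restriction of `g` to the closed span of the tail of `y`. -/
def tailNorm (y : ℕ → E) (g : E →L[ℝ] ℝ) (n : ℕ) : ℝ :=
  ‖g.comp (tailSpan y n).subtypeL‖

/-- the quantity `sh` measuring how far a basic sequence is from being shrinking. -/
def sh (y : ℕ → E) : ℝ :=
  sSup ((fun g : E →L[ℝ] ℝ => limsup (tailNorm y g) atTop) '' {g | ‖g‖ ≤ 1})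

/-- non-symmetrised Hausdorff distance `d̂(A,B)`. -/
def hdist (A B : Set E) : ℝ := sSup ((fun a => infDist a B) '' A)

/-- ordinary distance between two sets. -/
def setDist (A B : Set E) : ℝ := sInf {d : ℝ | ∃ a ∈ A, ∃ b ∈ B, d = dist a b}

/-- `ca` measures how far a sequence is from being norm-Cauchy. -/
def ca (z : ℕ → E) : ℝ :=
  ⨅ n : ℕ, sSup {d : ℝ | ∃ k, n ≤ k ∧ ∃ l, n ≤ l ∧ d = ‖z k - z l‖}

/-- measure of non-separability. -/
def sep (A : Set E) : ℝ :=
  sInf {ε : ℝ | 0 < ε ∧ ∃ C : Set E, C.Countable ∧ ∀ a ∈ A, ∃ c ∈ C, ‖a - c‖ ≤ ε}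

/-- `V`: the closed linear span of the coordinate functionals. -/
def dualSpan (g : ℕ → E →L[ℝ] ℝ) : Submodule ℝ (StrongDual ℝ E) :=
  (Submodule.span ℝ (Set.range g)).topologicalClosure

lemma mem_dualSpan (g : ℕ → E →L[ℝ] ℝ) (i : ℕ) : g i ∈ dualSpan g :=
  Submodule.le_topologicalClosure _ (Submodule.subset_span ⟨i, rfl⟩)

/-- the quantity `bc₁` measuring non-bounded-completeness. -/
def bc1 (y : ℕ → E) : ℝ :=
  sSup {c : ℝ | ∃ a : ℕ → ℝ,
    (∀ n, ‖∑ i ∈ Finset.range n, a i • y i‖ ≤ 1) ∧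
    c = ca (fun n => ∑ i ∈ Finset.range n, a i • y i)}

/-- the quantity `bc₂`. -/
def bc2 (y : ℕ → E) (g : ℕ → E →L[ℝ] ℝ) : ℝ :=
  sSup {c : ℝ | ∃ φ : ↥(dualSpan g) →L[ℝ] ℝ, @Norm.norm _ (@ContinuousLinearMap.hasOpNorm ℝ ℝ ↥(dualSpan g) ℝ _ _ _ _ _ _ (RingHom.id ℝ)) φ ≤ 1 ∧
    c = ca (fun n => ∑ i ∈ Finset.range n, φ ⟨g i, mem_dualSpan g i⟩ • y i)}

/-- the quantity `bc₃`. -/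
def bc3 (y : ℕ → E) (g : ℕ → E →L[ℝ] ℝ) : ℝ :=
  sSup {c : ℝ | ∃ Φ : StrongDual ℝ (StrongDual ℝ E), ‖Φ‖ ≤ 1 ∧
    c = ca (fun n => ∑ i ∈ Finset.range n, Φ (g i) • y i)}

/-- `α_Y(X)`: measures how well `Y` embeds isomorphically into `X`. -/
def alpha (Y X : Type*) [NormedAddCommGroup Y] [NormedSpace ℝ Y]
    [NormedAddCommGroup X] [NormedSpace ℝ X] : ℝ :=
  sSup {c : ℝ | ∃ T : Y →L[ℝ] X, ‖T‖ ≤ 1 ∧ ∀ y : Y, c * ‖y‖ ≤ ‖T y‖}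

/-- `β_Y(X)`: measures how well `Y` embeds complementably into `X`. -/
def beta (Y X : Type*) [NormedAddCommGroup Y] [NormedSpace ℝ Y]
    [NormedAddCommGroup X] [NormedSpace ℝ X] : ℝ :=
  sSup {c : ℝ | ∃ (A : X →L[ℝ] Y) (B : Y →L[ℝ] X),
    A.comp B = ContinuousLinearMap.id ℝ Y ∧ c * (‖A‖ * ‖B‖) ≤ 1}

/-- weak-star closure of a subset of the bidual. -/
def wstarClosure {X : Type*} [NormedAddCommGroup X] [NormedSpace ℝ X]
    (S : Set (StrongDual ℝ (StrongDual ℝ X))) : Set (StrongDual ℝ (StrongDual ℝ X)) :=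
  {z | StrongDual.toWeakDual z ∈ closure (StrongDual.toWeakDual '' S)}

/-- the measure of weak non-compactness `wk_X(A)`. -/
def wk (X : Type*) [NormedAddCommGroup X] [NormedSpace ℝ X] (A : Set X) : ℝ :=
  hdist (wstarClosure ((inclusionInDoubleDual ℝ X) '' A))
    (Set.range (inclusionInDoubleDual ℝ X))

/-- weak-star cluster points in the bidual of a sequence in `X`. -/
def wclust {X : Type*} [NormedAddCommGroup X] [NormedSpace ℝ X] (u : ℕ → X) :
    Set (StrongDual ℝ (StrongDual ℝ X)) :=
  {z | MapClusterPt (StrongDual.toWeakDual z) atTop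
      (fun n => StrongDual.toWeakDual (inclusionInDoubleDual ℝ X (u n)))}

/-- the measure of weak non-compactness `wck_X(A)`. -/
def wck (X : Type*) [NormedAddCommGroup X] [NormedSpace ℝ X] (A : Set X) : ℝ :=
  sSup {c : ℝ | ∃ u : ℕ → X, (∀ n, u n ∈ A) ∧
    c = setDist (wclust u) (Set.range (inclusionInDoubleDual ℝ X))}


/-- the canonical map `j : X → V*` for a subspace `V` of the dual,
`⟨j v, x*⟩ = x*(v)`. -/
def jfun {X : Type*} [NormedAddCommGroup X] [NormedSpace ℝ X]
    (V : Submodule ℝ (StrongDual ℝ X)) (v : X) : ↥V →L[ℝ] ℝ :=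
  (inclusionInDoubleDual ℝ X v).comp V.subtypeL

/-- the space `ℓ₁` of absolutely summable real sequences. -/
abbrev ell1 : Type := lp (fun _ : ℕ => ℝ) 1

/-- the space `c₀` of real sequences converging to zero, with the sup norm. -/
abbrev czero : Type := ZeroAtInftyContinuousMap ℕ ℝ

end

noncomputable section Aux

open Filter Metric NormedSpace Set Topology

set_option synthInstance.maxHeartbeats 1000000 in
section
set_option synthInstance.maxHeartbeats 1000000
set_option maxHeartbeats 1000000

variable {X : Type*} [NormedAddCommGroup X] [NormedSpace ℝ X]

lemma basisProj_apply (x : ℕ → X) (f : ℕ → X →L[ℝ] ℝ) (n : ℕ) (v : X) :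
    basisProj x f n v = ∑ i ∈ Finset.range n, f i v • x i := by
  simp [basisProj, ContinuousLinearMap.sum_apply]

lemma coord_apply {x : ℕ → X} {f : ℕ → X →L[ℝ] ℝ} (hb : IsSchauderBasis x f) (i j : ℕ) :
    f i (x j) = if i = j then (1 : ℝ) else 0 := by
  refine (hb.unique (fun i => if i = j then (1:ℝ) else 0) (x j) ?_ i).symm
  have hev : ∀ n, j + 1 ≤ n →
      (∑ i ∈ Finset.range n, (if i = j then (1:ℝ) else 0) • x i) = x j := by
    intro n hn
    have : ∀ i, (if i = j then (1:ℝ) else 0) • x i = if i = j then x i else 0 := by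
      intro i; split <;> simp
    simp only [this, Finset.sum_ite_eq' (Finset.range n) j]
    simp [Nat.lt_of_succ_le hn]
  refine Tendsto.congr' ?_ tendsto_const_nhds
  filter_upwards [eventually_ge_atTop (j+1)] with n hn
  exact (hev n hn).symm

lemma tailNorm_nonneg (y : ℕ → X) (g : X →L[ℝ] ℝ) (n : ℕ) : 0 ≤ tailNorm y g n := by
  unfold tailNorm; exact ContinuousLinearMap.opNorm_nonneg _

lemma tailNorm_le_norm (y : ℕ → X) (g : X →L[ℝ] ℝ) (n : ℕ) : tailNorm y g n ≤ ‖g‖ := by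
  unfold tailNorm
  refine ContinuousLinearMap.opNorm_le_bound _ (norm_nonneg g) fun v => ?_
  simpa using g.le_opNorm (v : X)

lemma tailSpan_antitone (y : ℕ → X) : Antitone (tailSpan y) := by
  intro m n h
  exact Submodule.topologicalClosure_mono
    (Submodule.span_mono (Set.image_mono fun i hi => le_trans h hi))

lemma tailNorm_antitone (y : ℕ → X) (g : X →L[ℝ] ℝ) : Antitone (tailNorm y g) := by
  intro m n h
  unfold tailNorm
  refine ContinuousLinearMap.opNorm_le_bound _ (ContinuousLinearMap.opNorm_nonneg _) fun v => ?_
  have hv : (v : X) ∈ tailSpan y m := tailSpan_antitone y h v.2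
  simpa using (g.comp (tailSpan y m).subtypeL).le_opNorm ⟨(v : X), hv⟩

lemma tailNorm_le_add (y : ℕ → X) (g w : X →L[ℝ] ℝ) (n : ℕ) :
    tailNorm y g n ≤ tailNorm y (g - w) n + tailNorm y w n := by
  unfold tailNorm
  have h : g.comp (tailSpan y n).subtypeL
      = (g - w).comp (tailSpan y n).subtypeL + w.comp (tailSpan y n).subtypeL := by
    rw [← ContinuousLinearMap.add_comp, sub_add_cancel]
  rw [h]
  exact (ContinuousLinearMap.opNorm_add_le _ _)

lemma tailNorm_tendsto (y : ℕ → X) (g : X →L[ℝ] ℝ) :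
    Tendsto (tailNorm y g) atTop (𝓝 (⨅ n, tailNorm y g n)) :=
  tendsto_atTop_ciInf (tailNorm_antitone y g)
    ⟨0, by rintro _ ⟨n, rfl⟩; exact tailNorm_nonneg y g n⟩

lemma tailNorm_limsup_eq (y : ℕ → X) (g : X →L[ℝ] ℝ) :
    limsup (tailNorm y g) atTop = ⨅ n, tailNorm y g n :=
  (tailNorm_tendsto y g).limsup_eq

lemma comp_basisProj_mem_span (x : ℕ → X) (f : ℕ → X →L[ℝ] ℝ) (g : X →L[ℝ] ℝ) (n : ℕ) :
    g.comp (basisProj x f n) ∈ Submodule.span ℝ (Set.range f) := by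
  have : g.comp (basisProj x f n) = ∑ i ∈ Finset.range n, g (x i) • f i := by
    ext v
    simp [basisProj_apply, ContinuousLinearMap.sum_apply, map_sum, mul_comm]
  rw [this]
  exact Submodule.sum_mem _ fun i _ =>
    Submodule.smul_mem _ _ (Submodule.subset_span ⟨i, rfl⟩)

lemma sub_basisProj_mem_tailSpan [CompleteSpace X] {x : ℕ → X} {f : ℕ → X →L[ℝ] ℝ}
    (hb : IsSchauderBasis x f) (n : ℕ) (v : X) :
    v - basisProj x f n v ∈ tailSpan x n := by
  have key : Tendsto (fun m => ∑ i ∈ Finset.Ico n m, f i v • x i) atTop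
      (𝓝 (v - basisProj x f n v)) := by
    refine Tendsto.congr' ?_ ((hb.expand v).sub_const (basisProj x f n v))
    filter_upwards [eventually_ge_atTop n] with m hm
    rw [basisProj_apply, eq_comm, Finset.sum_Ico_eq_sub _ hm]
  refine (Submodule.isClosed_topologicalClosure _).mem_of_tendsto key ?_
  filter_upwards with m
  exact Submodule.le_topologicalClosure _ <| Submodule.sum_mem _ fun i hi =>
    Submodule.smul_mem _ _ <| Submodule.subset_span ⟨i, (Finset.mem_Ico.mp hi).1, rfl⟩

lemma norm_sub_comp_basisProj_le [CompleteSpace X] {x : ℕ → X} {f : ℕ → X →L[ℝ] ℝ}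
    (hb : IsSchauderBasis x f) {K : ℝ} (hK0 : 0 ≤ K)
    (hKn : ∀ n, ‖basisProj x f n‖ ≤ K) (g : X →L[ℝ] ℝ) (n : ℕ) :
    ‖g - g.comp (basisProj x f n)‖ ≤ (K + 1) * tailNorm x g n := by
  refine ContinuousLinearMap.opNorm_le_bound _
    (mul_nonneg (by linarith) (tailNorm_nonneg x g n)) fun v => ?_
  have hmem := sub_basisProj_mem_tailSpan hb n v
  have h1 : ‖(g - g.comp (basisProj x f n)) v‖
      = ‖(g.comp (tailSpan x n).subtypeL) ⟨v - basisProj x f n v, hmem⟩‖ := by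
    simp [map_sub]
  rw [h1]
  calc ‖(g.comp (tailSpan x n).subtypeL) ⟨v - basisProj x f n v, hmem⟩‖
      ≤ tailNorm x g n * ‖v - basisProj x f n v‖ := by
        simpa [tailNorm] using (g.comp (tailSpan x n).subtypeL).le_opNorm
          ⟨v - basisProj x f n v, hmem⟩
    _ ≤ tailNorm x g n * ((1 + K) * ‖v‖) := by
        refine mul_le_mul_of_nonneg_left ?_ (tailNorm_nonneg x g n)
        calc ‖v - basisProj x f n v‖ ≤ ‖v‖ + ‖basisProj x f n v‖ := norm_sub_le _ _
          _ ≤ ‖v‖ + K * ‖v‖ := by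
              have := (basisProj x f n).le_opNorm v
              have h2 : ‖basisProj x f n‖ * ‖v‖ ≤ K * ‖v‖ :=
                mul_le_mul_of_nonneg_right (hKn n) (norm_nonneg _)
              linarith
          _ = (1 + K) * ‖v‖ := by ring
    _ = (K + 1) * tailNorm x g n * ‖v‖ := by ring

lemma tailNorm_eventually_zero {x : ℕ → X} {f : ℕ → X →L[ℝ] ℝ}
    (hb : IsSchauderBasis x f) {w : X →L[ℝ] ℝ}
    (hw : w ∈ Submodule.span ℝ (Set.range f)) :
    ∃ N, ∀ n, N ≤ n → tailNorm x w n = 0 := by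
  have key : ∃ N, ∀ j, N ≤ j → w (x j) = 0 := by
    induction hw using Submodule.span_induction with
    | mem w hw =>
        obtain ⟨i, rfl⟩ := hw
        exact ⟨i + 1, fun j hj => by
          rw [coord_apply hb]; simp [Nat.ne_of_lt (Nat.lt_of_succ_le hj)]⟩
    | zero => exact ⟨0, fun j _ => rfl⟩
    | add a b _ _ ha hb' =>
        obtain ⟨N₁, h₁⟩ := ha; obtain ⟨N₂, h₂⟩ := hb'
        exact ⟨max N₁ N₂, fun j hj => by
          simp [ContinuousLinearMap.add_apply,
            h₁ j (le_trans (le_max_left _ _) hj), h₂ j (le_trans (le_max_right _ _) hj)]⟩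
    | smul c a _ ha =>
        obtain ⟨N, hN⟩ := ha
        exact ⟨N, fun j hj => by simp [hN j hj]⟩
  obtain ⟨N, hN⟩ := key
  refine ⟨N, fun n hn => ?_⟩
  have hker : tailSpan x n ≤ LinearMap.ker (w : X →ₗ[ℝ] ℝ) := by
    refine Submodule.topologicalClosure_minimal _ (Submodule.span_le.mpr ?_)
      (ContinuousLinearMap.isClosed_ker w)
    rintro _ ⟨j, hj, rfl⟩
    exact hN j (le_trans hn hj)
  unfold tailNorm
  refine le_antisymm (ContinuousLinearMap.opNorm_le_bound _ le_rfl fun v => ?_)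
    (ContinuousLinearMap.opNorm_nonneg _)
  have : w (v : X) = 0 := hker v.2
  simp [this]

end
end Aux


set_option maxHeartbeats 1000000
set_option synthInstance.maxHeartbeats 1000000

/-- Theorem 3.3: `sh((xₙ)) ≤ d̂(B_{X*}, V) ≤ (K+1)·sh((xₙ))`. -/
theorem sh_le_hdist_le {X : Type*} [NormedAddCommGroup X] [NormedSpace ℝ X] [CompleteSpace X]
    (hinf : ¬ FiniteDimensional ℝ X)
    (x : ℕ → X) (f : ℕ → X →L[ℝ] ℝ) (hb : IsSchauderBasis x f)
    (K : ℝ) (hK : K = ⨆ n : ℕ, ‖basisProj x f n‖) :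
    sh x ≤ hdist (Metric.closedBall (0 : StrongDual ℝ X) 1) (dualSpan f : Set (StrongDual ℝ X)) ∧
    hdist (Metric.closedBall (0 : StrongDual ℝ X) 1) (dualSpan f : Set (StrongDual ℝ X)) ≤ (K + 1) * sh x := by
  classical
  have hKbdd : BddAbove (Set.range fun n => ‖basisProj x f n‖) := by
    obtain ⟨C', hC'⟩ := banach_steinhaus (g := basisProj x f) (fun v => by
      have ht : Tendsto (fun n => ‖basisProj x f n v‖) atTop (𝓝 ‖v‖) := by
        refine Tendsto.norm ?_
        exact (hb.expand v).congr (fun n => (basisProj_apply x f n v).symm)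
      obtain ⟨C, hC⟩ := ht.bddAbove_range
      exact ⟨C, fun n => hC ⟨n, rfl⟩⟩)
    exact ⟨C', by rintro _ ⟨n, rfl⟩; exact hC' n⟩
  have hKn : ∀ n, ‖basisProj x f n‖ ≤ K := fun n => hK ▸ le_ciSup hKbdd n
  have hK0 : 0 ≤ K := le_trans (norm_nonneg _) (hKn 0)
  have hbb : ∀ g : StrongDual ℝ X, BddBelow (Set.range (tailNorm x g)) := fun g =>
    ⟨0, by rintro _ ⟨n, rfl⟩; exact tailNorm_nonneg x g n⟩
  -- bounds for the two sup-sets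
  have hBdd1 : BddAbove ((fun g : StrongDual ℝ X => infDist g (dualSpan f : Set (StrongDual ℝ X))) ''
      Metric.closedBall 0 1) := by
    refine ⟨1, ?_⟩
    rintro _ ⟨g, hg, rfl⟩ <;> beta_reduce
    calc infDist g (dualSpan f : Set (StrongDual ℝ X)) ≤ dist g 0 :=
          infDist_le_dist_of_mem (Submodule.zero_mem _)
      _ ≤ 1 := by rwa [Metric.mem_closedBall] at hg
  have hBdd2 : BddAbove ((fun g : StrongDual ℝ X => limsup (tailNorm x g) atTop) ''
      {g | ‖g‖ ≤ 1}) := by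
    refine ⟨1, ?_⟩
    rintro _ ⟨g, hg, rfl⟩ <;> beta_reduce
    rw [tailNorm_limsup_eq]
    exact le_trans (ciInf_le (hbb g) 0) (le_trans (tailNorm_le_norm x g 0) hg)
  have hsh0 : 0 ≤ sh x := by
    have h0 : limsup (tailNorm x (0 : StrongDual ℝ X)) atTop = 0 := by
      have h : tailNorm x (0 : StrongDual ℝ X) = fun _ => (0 : ℝ) := by
        funext n; unfold tailNorm
        rw [ContinuousLinearMap.zero_comp]
        exact ContinuousLinearMap.opNorm_zero
      rw [h, limsup_const]
    calc (0 : ℝ) = limsup (tailNorm x (0 : StrongDual ℝ X)) atTop := h0.symm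
      _ ≤ sh x := le_csSup hBdd2 ⟨0, show ‖(0 : StrongDual ℝ X)‖ ≤ 1 by rw [norm_zero]; exact zero_le_one, rfl⟩
  -- key 1 : limsup tailNorm ≤ infDist
  have key1 : ∀ g : StrongDual ℝ X, limsup (tailNorm x g) atTop ≤
      infDist g (dualSpan f : Set (StrongDual ℝ X)) := by
    intro g
    rw [tailNorm_limsup_eq]
    have hV : infDist g (dualSpan f : Set (StrongDual ℝ X)) =
        infDist g (Submodule.span ℝ (Set.range f) : Set (StrongDual ℝ X)) := by
      rw [dualSpan, Submodule.topologicalClosure_coe, infDist_closure]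
    rw [hV, infDist_eq_iInf]
    have : Nonempty ((Submodule.span ℝ (Set.range f) : Set (StrongDual ℝ X))) :=
      ⟨⟨0, Submodule.zero_mem _⟩⟩
    refine le_ciInf fun w => ?_
    obtain ⟨N, hN⟩ := tailNorm_eventually_zero hb w.2
    calc (⨅ n, tailNorm x g n) ≤ tailNorm x g N := ciInf_le (hbb g) N
      _ ≤ tailNorm x (g - w) N + tailNorm x (w : StrongDual ℝ X) N := tailNorm_le_add x g w N
      _ = tailNorm x (g - w) N := by rw [hN N le_rfl, add_zero]
      _ ≤ ‖g - (w : StrongDual ℝ X)‖ := tailNorm_le_norm x _ N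
      _ = dist g w := (dist_eq_norm _ _).symm
  constructor
  · rw [sh, hdist]
    refine Real.sSup_le ?_ ?_
    · rintro _ ⟨g, hg, rfl⟩ <;> beta_reduce
      refine le_trans (key1 g) (le_csSup hBdd1 ⟨g, ?_, rfl⟩)
      exact mem_closedBall_zero_iff.mpr hg
    · exact le_trans infDist_nonneg
        (le_csSup hBdd1 ⟨0, Metric.mem_closedBall_self zero_le_one, rfl⟩)
  · rw [hdist]
    refine Real.sSup_le ?_ (mul_nonneg (by linarith) hsh0)
    rintro _ ⟨g, hg, rfl⟩ <;> beta_reduce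
    rw [mem_closedBall_zero_iff] at hg
    have h1 : ∀ n, infDist g (dualSpan f : Set (StrongDual ℝ X)) ≤ (K + 1) * tailNorm x g n := by
      intro n
      have hmem : g.comp (basisProj x f n) ∈ dualSpan f :=
        Submodule.le_topologicalClosure _ (comp_basisProj_mem_span x f g n)
      refine le_trans (infDist_le_dist_of_mem hmem) ?_
      rw [dist_eq_norm]
      exact norm_sub_comp_basisProj_le hb hK0 hKn g n
    have h2 : infDist g (dualSpan f : Set (StrongDual ℝ X)) ≤ (K + 1) * ⨅ n, tailNorm x g n := by
      rw [Real.mul_iInf_of_nonneg (by linarith)]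
      exact le_ciInf h1
    refine h2.trans (mul_le_mul_of_nonneg_left ?_ (by linarith))
    rw [← tailNorm_limsup_eq]
    exact le_csSup hBdd2 ⟨g, hg, rfl⟩
end

section
/- Let X be a real infinite-dimensional Banach space with a Schauder basis (x_n)_{n=1}^∞, coordinate functionals (x*_n) and V the closed linear span of {x*_n : n ∈ ℕ} in X*. Then α_{ℓ₁}(X) ≤ sep(B_{X*}) ≤ d̂(B_{X*}, V). -/
open Filter Metric NormedSpace Set Topology

noncomputable section

lemma ell1_summable (y : ell1) : Summable fun n => ‖y n‖ := by
  have := (lp.memℓp y).summable (p := 1) (by norm_num)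
  simpa using this

lemma ell1_norm (y : ell1) : ‖y‖ = ∑' n, ‖y n‖ := by
  have := lp.norm_eq_tsum_rpow (p := 1) (by norm_num) y
  simpa using this

lemma exists_sign_functional (ε : ℕ → ℝ) (hε : ∀ n, ‖ε n‖ ≤ 1) :
    ∃ φ : ell1 →L[ℝ] ℝ, ‖φ‖ ≤ 1 ∧ ∀ y : ell1, φ y = ∑' n, ε n * y n := by
  have hsum : ∀ y : ell1, Summable fun n => ε n * y n := by
    intro y
    apply Summable.of_norm_bounded (ell1_summable y)
    intro n
    rw [norm_mul]
    calc ‖ε n‖ * ‖(y : ∀ _ : ℕ, ℝ) n‖ ≤ 1 * ‖(y : ∀ _ : ℕ, ℝ) n‖ :=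
          mul_le_mul_of_nonneg_right (hε n) (norm_nonneg _)
      _ = ‖(y : ∀ _ : ℕ, ℝ) n‖ := one_mul _
  let L : ell1 →ₗ[ℝ] ℝ :=
    { toFun := fun y => ∑' n, ε n * y n
      map_add' := fun y z => by
        have h : ∀ n, ε n * ((y + z) n) = ε n * y n + ε n * z n := fun n => by
          rw [lp.coeFn_add]; simp [mul_add]
        show ∑' n, ε n * ((y + z) n) = _
        rw [tsum_congr h, Summable.tsum_add (hsum y) (hsum z)]
      map_smul' := fun c y => by
        have h : ∀ n, ε n * ((c • y) n) = c * (ε n * y n) := fun n => by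
          rw [lp.coeFn_smul]; simp; ring
        show ∑' n, ε n * ((c • y) n) = _
        rw [tsum_congr h, tsum_mul_left]
        rfl }
  have hbound : ∀ y : ell1, ‖L y‖ ≤ 1 * ‖y‖ := by
    intro y
    rw [one_mul, ell1_norm]
    calc ‖∑' n, ε n * y n‖ ≤ ∑' n, ‖ε n * (y : ∀ _ : ℕ, ℝ) n‖ :=
          norm_tsum_le_tsum_norm (by simpa [abs_mul] using (hsum y).abs)
      _ ≤ ∑' n, ‖(y : ∀ _ : ℕ, ℝ) n‖ := by
          apply Summable.tsum_le_tsum _ (by simpa [abs_mul] using (hsum y).abs) (ell1_summable y)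
          intro n
          rw [norm_mul]
          calc ‖ε n‖ * ‖(y : ∀ _ : ℕ, ℝ) n‖ ≤ 1 * ‖(y : ∀ _ : ℕ, ℝ) n‖ :=
                mul_le_mul_of_nonneg_right (hε n) (norm_nonneg _)
            _ = _ := one_mul _
  exact ⟨L.mkContinuous 1 hbound, L.mkContinuous_norm_le zero_le_one hbound,
    fun y => rfl⟩

open Classical in
def sgnFun (A : Set ℕ) : ℕ → ℝ := fun n => if n ∈ A then 1 else -1

lemma sgnFun_norm_le (A : Set ℕ) (n : ℕ) : ‖sgnFun A n‖ ≤ 1 := by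
  unfold sgnFun
  split <;> simp

lemma norm_ell1_single (n : ℕ) : ‖(lp.single 1 n (1 : ℝ) : ell1)‖ = 1 := by
  have := lp.norm_single (E := fun _ : ℕ => ℝ) (p := 1) (by norm_num) n (1 : ℝ)
  simpa using this

lemma exists_hb_functional {X : Type*} [NormedAddCommGroup X] [NormedSpace ℝ X]
    (T : ell1 →L[ℝ] X) {c : ℝ} (hc : 0 < c)
    (hlow : ∀ y, c * ‖y‖ ≤ ‖T y‖) (A : Set ℕ) :
    ∃ g : X →L[ℝ] ℝ, ‖g‖ ≤ 1 / c ∧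
      ∀ n : ℕ, g (T (lp.single 1 n (1 : ℝ))) = sgnFun A n := by
  have hinj : Function.Injective (T.toLinearMap : ell1 →ₗ[ℝ] X) := by
    rw [injective_iff_map_eq_zero]
    intro y hy
    have h1 : c * ‖y‖ ≤ 0 := by
      have := hlow y
      rw [show T y = T.toLinearMap y from rfl, hy, norm_zero] at this
      exact this
    have h2 : ‖y‖ ≤ 0 := by nlinarith [norm_nonneg y]
    exact norm_le_zero_iff.mp h2
  set p : Submodule ℝ X := LinearMap.range (T.toLinearMap : ell1 →ₗ[ℝ] X) with hp
  let e : ell1 ≃ₗ[ℝ] p := LinearEquiv.ofInjective _ hinj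
  have hTe : ∀ z : p, T (e.symm z) = (z : X) := by
    intro z
    conv_rhs => rw [← e.apply_symm_apply z]
    exact (LinearEquiv.ofInjective_apply _ _).symm
  obtain ⟨φ, hφ1, hφ2⟩ := exists_sign_functional (sgnFun A) (sgnFun_norm_le A)
  have hsymm : ∀ z : p, ‖(e.symm z : ell1)‖ ≤ (1 / c) * ‖(z : X)‖ := by
    intro z
    have h := hlow (e.symm z)
    rw [hTe z] at h
    rw [one_div, ← div_eq_inv_mul, le_div_iff₀ hc, mul_comm]
    exact h
  let ψ : p →ₗ[ℝ] ℝ := φ.toLinearMap.comp (e.symm : p ≃ₗ[ℝ] ell1).toLinearMap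
  have hψb : ∀ z : p, ‖ψ z‖ ≤ (1 / c) * ‖z‖ := by
    intro z
    have h1 : ‖φ (e.symm z)‖ ≤ ‖e.symm z‖ := by
      calc ‖φ (e.symm z)‖ ≤ ‖φ‖ * ‖(e.symm z : ell1)‖ := φ.le_opNorm _
        _ ≤ 1 * ‖(e.symm z : ell1)‖ :=
            mul_le_mul_of_nonneg_right hφ1 (norm_nonneg _)
        _ = _ := one_mul _
    exact h1.trans (hsymm z)
  let ψc : p →L[ℝ] ℝ := ψ.mkContinuous (1 / c) hψb
  obtain ⟨g, hg, hgn⟩ := exists_extension_norm_eq p ψc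
  refine ⟨g, ?_, ?_⟩
  · rw [hgn]
    exact ψ.mkContinuous_norm_le (by positivity) hψb
  · intro n
    set en : ell1 := lp.single 1 n (1 : ℝ) with hen
    have hmem : T en ∈ p := ⟨en, rfl⟩
    have h1 : g (T en) = ψc ⟨T en, hmem⟩ := hg ⟨T en, hmem⟩
    have h2 : e.symm ⟨T en, hmem⟩ = en := by
      apply e.injective
      rw [e.apply_symm_apply]
      apply Subtype.ext
      exact (LinearEquiv.ofInjective_apply (h := hinj) _ en)
    have h3 : ψc ⟨T en, hmem⟩ = φ en := by
      show φ (e.symm ⟨T en, hmem⟩) = φ en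
      rw [h2]
    rw [h1, h3, hφ2]
    rw [tsum_eq_single n]
    · rw [hen, lp.single_apply_self, mul_one]
    · intro m hmn
      rw [hen, lp.single_apply_ne 1 n _ hmn, mul_zero]

lemma sgnFun_abs_sub (A B : Set ℕ) (n : ℕ) (hn : ¬ (n ∈ A ↔ n ∈ B)) :
    ‖sgnFun A n - sgnFun B n‖ = 2 := by
  unfold sgnFun
  by_cases h1 : n ∈ A <;> by_cases h2 : n ∈ B <;>
    simp [h1, h2] at hn ⊢ <;> norm_num

lemma exists_separated_family {X : Type*} [NormedAddCommGroup X] [NormedSpace ℝ X]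
    (T : ell1 →L[ℝ] X) (hT : ‖T‖ ≤ 1) {c : ℝ} (hc : 0 < c)
    (hlow : ∀ y, c * ‖y‖ ≤ ‖T y‖) :
    ∃ h : Set ℕ → (X →L[ℝ] ℝ), (∀ A, ‖h A‖ ≤ 1) ∧
      ∀ A B : Set ℕ, A ≠ B → 2 * c ≤ ‖h A - h B‖ := by
  choose g hg1 hg2 using exists_hb_functional T hc hlow
  have hTen : ∀ n : ℕ, ‖T (lp.single 1 n (1 : ℝ))‖ ≤ 1 := by
    intro n
    calc ‖T (lp.single 1 n (1:ℝ))‖ ≤ ‖T‖ * ‖(lp.single 1 n (1:ℝ) : ell1)‖ :=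
          T.le_opNorm _
      _ ≤ 1 * 1 := mul_le_mul hT (le_of_eq (norm_ell1_single n)) (norm_nonneg _)
          zero_le_one
      _ = 1 := one_mul 1
  refine ⟨fun A => c • g A, fun A => ?_, fun A B hAB => ?_⟩
  · show ‖c • g A‖ ≤ 1
    have hns := norm_smul c (g A)
    rw [hns, Real.norm_eq_abs, abs_of_pos hc]
    calc c * ‖g A‖ ≤ c * (1 / c) := mul_le_mul_of_nonneg_left (hg1 A) hc.le
      _ = 1 := by field_simp
  · obtain ⟨n, hn⟩ : ∃ n, ¬ (n ∈ A ↔ n ∈ B) := by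
      by_contra h
      push_neg at h
      exact hAB (Set.ext h)
    have hval : ‖(g A - g B) (T (lp.single 1 n (1:ℝ)))‖ = 2 := by
      rw [ContinuousLinearMap.sub_apply, hg2 A n, hg2 B n]
      exact sgnFun_abs_sub A B n hn
    have h2c : (2 : ℝ) ≤ ‖g A - g B‖ := by
      have h := (g A - g B).le_opNorm (T (lp.single 1 n (1:ℝ)))
      rw [hval] at h
      calc (2:ℝ) ≤ ‖g A - g B‖ * ‖T (lp.single 1 n (1:ℝ))‖ := h
        _ ≤ ‖g A - g B‖ * 1 :=
            mul_le_mul_of_nonneg_left (hTen n) (norm_nonneg _)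
        _ = _ := mul_one _
    show 2 * c ≤ ‖c • g A - c • g B‖
    rw [show c • g A - c • g B = c • (g A - g B) from (smul_sub c (g A) (g B)).symm]
    have hns := norm_smul c (g A - g B)
    rw [hns, Real.norm_eq_abs, abs_of_pos hc]
    nlinarith

lemma uncountable_set_nat : Uncountable (Set ℕ) := by
  rw [← Cardinal.aleph0_lt_mk_iff, Cardinal.mk_set_nat]
  exact Cardinal.aleph0_lt_continuum

lemma pigeonhole_sep {W : Type*} [NormedAddCommGroup W] [NormedSpace ℝ W]
    {c ε : ℝ} (hc : 0 < c) (h : Set ℕ → W)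
    (hball : ∀ A, ‖h A‖ ≤ 1)
    (hsep : ∀ A B : Set ℕ, A ≠ B → 2 * c ≤ ‖h A - h B‖)
    (C : Set W) (hC : C.Countable)
    (hcover : ∀ a ∈ closedBall (0 : W) 1, ∃ x ∈ C, ‖a - x‖ ≤ ε) : c ≤ ε := by
  have hmem : ∀ A : Set ℕ, h A ∈ closedBall (0 : W) 1 := fun A =>
    mem_closedBall_zero_iff.mpr (hball A)
  choose F hF1 hF2 using fun A => hcover (h A) (hmem A)
  haveI := uncountable_set_nat
  haveI := hC.to_subtype
  have := not_injective_uncountable_countable (fun A : Set ℕ => (⟨F A, hF1 A⟩ : C))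
  rw [Function.not_injective_iff] at this
  obtain ⟨A, B, hFAB, hAB⟩ := this
  have hFeq : F A = F B := congrArg Subtype.val hFAB
  have h1 : ‖h A - h B‖ ≤ 2 * ε := by
    calc ‖h A - h B‖ = ‖(h A - F A) + (F B - h B)‖ := by rw [hFeq]; congr 1; abel
      _ ≤ ‖h A - F A‖ + ‖F B - h B‖ := norm_add_le _ _
      _ ≤ ε + ε := add_le_add (hF2 A) (by rw [norm_sub_rev]; exact hF2 B)
      _ = 2 * ε := by ring
  have := hsep A B hAB
  linarith

end

/-- (Theorem 3.4) -/
theorem alpha_le_sep_le_hdist {X : Type*} [NormedAddCommGroup X] [NormedSpace ℝ X]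
    [CompleteSpace X] (hinf : ¬ FiniteDimensional ℝ X)
    (x : ℕ → X) (f : ℕ → X →L[ℝ] ℝ) (hb : IsSchauderBasis x f) :
    alpha ell1 X ≤ sep (Metric.closedBall (0 : StrongDual ℝ X) 1) ∧
    sep (Metric.closedBall (0 : StrongDual ℝ X) 1) ≤
      hdist (Metric.closedBall (0 : StrongDual ℝ X) 1) (dualSpan f : Set (StrongDual ℝ X)) := by
  have hSmem : (1:ℝ) ∈ {ε : ℝ | 0 < ε ∧ ∃ C : Set (StrongDual ℝ X), C.Countable ∧
      ∀ a ∈ Metric.closedBall (0 : StrongDual ℝ X) 1, ∃ c ∈ C, ‖a - c‖ ≤ ε} := by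
    refine ⟨one_pos, {0}, Set.countable_singleton 0, fun a ha => ⟨0, Set.mem_singleton 0, ?_⟩⟩
    rw [sub_zero]
    exact mem_closedBall_zero_iff.mp ha
  have hsepnn : 0 ≤ sep (Metric.closedBall (0 : StrongDual ℝ X) 1) :=
    Real.sInf_nonneg fun ε hε => hε.1.le
  constructor
  · -- alpha ≤ sep
    unfold alpha sep
    unfold sep at hsepnn
    apply Real.sSup_le _ hsepnn
    rintro cc ⟨T, hT, hlow⟩
    rcases le_or_gt cc 0 with hcc | hcc
    · exact hcc.trans hsepnn
    · obtain ⟨hfam, hball, hsepf⟩ := exists_separated_family T hT hcc hlow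
      apply le_csInf ⟨1, hSmem⟩
      rintro ε ⟨hε, C, hC, hcover⟩
      have h2 := pigeonhole_sep hcc hfam hball hsepf C hC hcover
      linarith
  · -- sep ≤ hdist
    have hVsep : TopologicalSpace.IsSeparable ((dualSpan f : Submodule ℝ (StrongDual ℝ X)) :
        Set (StrongDual ℝ X)) := by
      have h1 : TopologicalSpace.IsSeparable (Set.range f) :=
        (Set.countable_range f).isSeparable
      have h2 := h1.span (R := ℝ)
      have h3 := h2.closure
      rwa [← Submodule.topologicalClosure_coe] at h3
    have h0V : (0 : StrongDual ℝ X) ∈ ((dualSpan f : Submodule ℝ (StrongDual ℝ X)) : Set (StrongDual ℝ X)) :=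
      Submodule.zero_mem _
    have hBdd : BddAbove ((fun a => infDist a ((dualSpan f : Submodule ℝ (StrongDual ℝ X)) :
        Set (StrongDual ℝ X))) '' Metric.closedBall (0 : StrongDual ℝ X) 1) := by
      refine ⟨1, ?_⟩
      rintro r ⟨a, ha, rfl⟩
      calc infDist a _ ≤ dist a 0 := infDist_le_dist_of_mem h0V
        _ ≤ 1 := mem_closedBall.mp ha
    have hHle : ∀ a ∈ Metric.closedBall (0 : StrongDual ℝ X) 1,
        infDist a ((dualSpan f : Submodule ℝ (StrongDual ℝ X)) : Set (StrongDual ℝ X)) ≤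
        hdist (Metric.closedBall (0 : StrongDual ℝ X) 1) (dualSpan f : Set (StrongDual ℝ X)) := by
      intro a ha
      unfold hdist
      exact le_csSup hBdd (Set.mem_image_of_mem _ ha)
    have hHnn : 0 ≤ hdist (Metric.closedBall (0 : StrongDual ℝ X) 1)
        (dualSpan f : Set (StrongDual ℝ X)) :=
      le_trans infDist_nonneg (hHle 0 (mem_closedBall_self zero_le_one))
    apply le_of_forall_gt_imp_ge_of_dense
    intro ε hε
    have hεpos : 0 < ε := lt_of_le_of_lt hHnn hε
    obtain ⟨C, hCcnt, hCsub⟩ := hVsep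
    unfold sep
    apply csInf_le ⟨0, fun r hr => hr.1.le⟩
    refine ⟨hεpos, C, hCcnt, fun a ha => ?_⟩
    have h1 : infDist a ((dualSpan f : Submodule ℝ (StrongDual ℝ X)) : Set (StrongDual ℝ X)) < ε :=
      lt_of_le_of_lt (hHle a ha) hε
    obtain ⟨v, hvV, hv⟩ := (infDist_lt_iff ⟨0, h0V⟩).mp h1
    obtain ⟨w, hwC, hw⟩ := Metric.mem_closure_iff.mp (hCsub hvV) (ε - dist a v)
      (by linarith)
    refine ⟨w, hwC, ?_⟩
    rw [← dist_eq_norm]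
    calc dist a w ≤ dist a v + dist v w := dist_triangle a v w
      _ ≤ ε := by linarith
end
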